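/- arXiv:2502.03003 — 6 statements merged into one kernel-verified Lean document; each statement's English description precedes it below -/
import Mathlib

section
/- Let G > 0 and Δ > 0 be constants and t₀ ∈ ℝ. Let ρ : [0,∞) → (0,∞) be continuous, differentiable on (0,∞) with ρ'(R) < 0 for all R > 0, and set m(R) = 4π ∫₀^R ρ(s) s² ds. Assume R³ > 2G m(R) Δ for all R > 0, define α(R) = t₀ + (2/3)·√(R³/(2G m(R)) − Δ) and r(R,t) = (2G m(R))^{1/3} · ((9/4)(t − α(R))² + Δ)^{1/3}. Then for any R₀ > 0 at which m(R₀)·α'(R₀)/m'(R₀) > (2/3)√Δ, one has: (i) ∂_R r(R₀, t) > 0 for all t ≤ α(R₀) (no shell-crossing before the bounce at shell R₀), and (ii) there exists t* with α(R₀) < t* < α(R₀) + (2/3)√Δ such that ∂_R r(R₀, t*) = 0 while ∂_R m(R₀) > 0, i.e. a shell-crossing singularity forms at shell R₀ within a time (2/3)√Δ after its bounce. -/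
set_option maxHeartbeats 1000000

open Real MeasureTheory intervalIntegral Set

/-- Effective marginally bound LTB dust collapse: for an initially decreasing
density profile, if `m * α' / m' > (2/3)√Δ` at a shell `R₀`, then no
shell-crossing occurs before the bounce of `R₀`, but a shell-crossing
singularity forms at `R₀` within a time `(2/3)√Δ` after its bounce. -/
theorem shell_crossing_after_bounce
    (G Δ t₀ : ℝ) (hG : 0 < G) (hΔ : 0 < Δ)
    (ρ m α : ℝ → ℝ) (r : ℝ → ℝ → ℝ)
    (hρc : ContinuousOn ρ (Set.Ici 0))
    (hρpos : ∀ R, 0 ≤ R → 0 < ρ R)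
    (hρd : ∀ R, 0 < R → DifferentiableAt ℝ ρ R ∧ deriv ρ R < 0)
    (hm : ∀ R, m R = 4 * π * ∫ s in (0:ℝ)..R, ρ s * s ^ 2)
    (hcond : ∀ R, 0 < R → 2 * G * m R * Δ < R ^ 3)
    (hα : ∀ R, α R = t₀ + (2 / 3) * Real.sqrt (R ^ 3 / (2 * G * m R) - Δ))
    (hr : ∀ R t, r R t =
      (2 * G * m R) ^ ((1:ℝ)/3) * ((9/4) * (t - α R) ^ 2 + Δ) ^ ((1:ℝ)/3))
    (R₀ : ℝ) (hR₀ : 0 < R₀)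
    (hineq : (2 / 3) * Real.sqrt Δ < m R₀ * deriv α R₀ / deriv m R₀) :
    (∀ t, t ≤ α R₀ → 0 < deriv (fun R => r R t) R₀) ∧
    (∃ ts, α R₀ < ts ∧ ts < α R₀ + (2 / 3) * Real.sqrt Δ ∧
      deriv (fun R => r R ts) R₀ = 0 ∧ 0 < deriv m R₀) := by
  -- integrand continuity and integrability
  have hfc : ContinuousOn (fun s => ρ s * s ^ 2) (Set.Ici 0) :=
    hρc.mul (continuous_pow 2).continuousOn
  have hint : IntervalIntegrable (fun s => ρ s * s ^ 2) volume 0 R₀ :=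
    (hfc.mono (by rw [Set.uIcc_of_le hR₀.le]; exact Set.Icc_subset_Ici_self)).intervalIntegrable
  -- m is positive at R₀
  have hIpos : 0 < ∫ s in (0:ℝ)..R₀, ρ s * s ^ 2 := by
    apply intervalIntegral_pos_of_pos_on hint _ hR₀
    intro x hx
    exact mul_pos (hρpos x hx.1.le) (pow_pos hx.1 2)
  have hmpos : 0 < m R₀ := by
    rw [hm R₀]; positivity
  -- derivative of m
  have hcontAt : ContinuousAt (fun s => ρ s * s ^ 2) R₀ :=
    hfc.continuousAt (Ici_mem_nhds hR₀)
  have hmeas : StronglyMeasurableAtFilter (fun s => ρ s * s ^ 2) (nhds R₀) volume :=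
    (hfc.mono (Set.Ioi_subset_Ici le_rfl)).stronglyMeasurableAtFilter isOpen_Ioi R₀ hR₀
  have hmfun : m = fun R => 4 * π * ∫ s in (0:ℝ)..R, ρ s * s ^ 2 := funext hm
  have hmd : HasDerivAt m (4 * π * (ρ R₀ * R₀ ^ 2)) R₀ := by
    rw [hmfun]
    exact (integral_hasDerivAt_right hint hmeas hcontAt).const_mul (4 * π)
  set M' : ℝ := 4 * π * (ρ R₀ * R₀ ^ 2) with hM'
  have hM'pos : 0 < M' := by
    have := hρpos R₀ hR₀.le
    have := pi_pos
    positivity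
  have hderivm : deriv m R₀ = M' := hmd.deriv
  -- α is differentiable at R₀
  have hcpos : 0 < 2 * G * m R₀ := by positivity
  have hwpos : 0 < R₀ ^ 3 / (2 * G * m R₀) - Δ := by
    have h := hcond R₀ hR₀
    rw [sub_pos, lt_div_iff₀ hcpos]
    linarith [h]
  have hαfun : α = fun R => t₀ + (2 / 3) * Real.sqrt (R ^ 3 / (2 * G * m R) - Δ) := funext hα
  have hαdiff : DifferentiableAt ℝ α R₀ := by
    rw [hαfun]
    apply DifferentiableAt.const_add
    apply DifferentiableAt.const_mul
    apply DifferentiableAt.comp (g := Real.sqrt)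
    · exact (Real.hasDerivAt_sqrt hwpos.ne').differentiableAt
    · exact DifferentiableAt.sub_const
        ((differentiableAt_pow 3).div (hmd.differentiableAt.const_mul _) hcpos.ne') _
  set A' : ℝ := deriv α R₀ with hA'
  have hαd : HasDerivAt α A' R₀ := hαdiff.hasDerivAt
  -- rearranged hypothesis
  have hineq' : (2 / 3) * Real.sqrt Δ * M' < m R₀ * A' := by
    have := (lt_div_iff₀ hM'pos).mp (by rwa [hderivm] at hineq)
    linarith
  have hsΔ : 0 < Real.sqrt Δ := Real.sqrt_pos.mpr hΔ
  have hA'pos : 0 < A' := by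
    nlinarith
  -- the key quantities
  set α₀ := α R₀ with hα₀
  have hqpos : ∀ t : ℝ, 0 < (9/4) * (t - α₀) ^ 2 + Δ := by
    intro t; nlinarith [sq_nonneg (t - α₀)]
  -- derivative of r in R
  have hrderiv : ∀ t : ℝ, HasDerivAt (fun R => r R t)
      ((1/3) * (2 * G * m R₀) ^ ((1:ℝ)/3 - 1) * ((9/4) * (t - α₀) ^ 2 + Δ) ^ ((1:ℝ)/3 - 1)
        * (2 * G) *
        (M' * ((9/4) * (t - α₀) ^ 2 + Δ) - (9/2) * m R₀ * A' * (t - α₀))) R₀ := by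
    intro t
    have hu : HasDerivAt (fun R => 2 * G * m R) (2 * G * M') R₀ := hmd.const_mul _
    have hu1 : HasDerivAt (fun R => (2 * G * m R) ^ ((1:ℝ)/3))
        (((1:ℝ)/3 * (2 * G * m R₀) ^ ((1:ℝ)/3 - 1)) * (2 * G * M')) R₀ :=
      by have := (Real.hasDerivAt_rpow_const (p := (1:ℝ)/3) (Or.inl hcpos.ne')).comp R₀ hu; exact this
    have hv : HasDerivAt (fun R => (9/4) * (t - α R) ^ 2 + Δ)
        ((9/4) * (2 * (t - α₀) ^ 1 * (0 - A')) ) R₀ := by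
      exact (((hasDerivAt_const R₀ t).sub hαd).pow 2).const_mul (9/4) |>.add_const Δ
    have hv1 : HasDerivAt (fun R => ((9/4) * (t - α R) ^ 2 + Δ) ^ ((1:ℝ)/3))
        (((1:ℝ)/3 * ((9/4) * (t - α₀) ^ 2 + Δ) ^ ((1:ℝ)/3 - 1)) *
          ((9/4) * (2 * (t - α₀) ^ 1 * (0 - A')))) R₀ :=
      by have := (Real.hasDerivAt_rpow_const (p := (1:ℝ)/3) (Or.inl (hqpos t).ne')).comp R₀ hv; exact this
    have hprod := hu1.mul hv1
    have hfe : (fun R => r R t) =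
        fun R => (2 * G * m R) ^ ((1:ℝ)/3) * ((9/4) * (t - α R) ^ 2 + Δ) ^ ((1:ℝ)/3) :=
      funext fun R => hr R t
    rw [hfe]
    refine hprod.congr_deriv ?_
    -- algebraic identity with rpow
    have e1 : (2 * G * m R₀) ^ ((1:ℝ)/3 - 1)
        = (2 * G * m R₀) ^ ((1:ℝ)/3) / (2 * G * m R₀) := by
      rw [Real.rpow_sub hcpos, Real.rpow_one]
    have e2 : ((9/4) * (t - α₀) ^ 2 + Δ) ^ ((1:ℝ)/3 - 1)
        = ((9/4) * (t - α₀) ^ 2 + Δ) ^ ((1:ℝ)/3) / ((9/4) * (t - α₀) ^ 2 + Δ) := by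
      rw [Real.rpow_sub (hqpos t), Real.rpow_one]
    rw [e1, e2]
    field_simp
    ring
  -- positivity of the prefactor
  have hKpos : ∀ t : ℝ, 0 < (1/3) * (2 * G * m R₀) ^ ((1:ℝ)/3 - 1)
      * ((9/4) * (t - α₀) ^ 2 + Δ) ^ ((1:ℝ)/3 - 1) * (2 * G) := by
    intro t
    have h1 := Real.rpow_pos_of_pos hcpos ((1:ℝ)/3 - 1)
    have h2 := Real.rpow_pos_of_pos (hqpos t) ((1:ℝ)/3 - 1)
    positivity
  set g : ℝ → ℝ := fun t => M' * ((9/4) * (t - α₀) ^ 2 + Δ) - (9/2) * m R₀ * A' * (t - α₀)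
    with hg
  constructor
  · -- part (i)
    intro t ht
    rw [(hrderiv t).deriv]
    apply mul_pos (hKpos t)
    have h1 : 0 < M' * ((9/4) * (t - α₀) ^ 2 + Δ) := mul_pos hM'pos (hqpos t)
    nlinarith [mul_nonneg (mul_nonneg (by norm_num : (0:ℝ) ≤ 9/2)
      (mul_pos hmpos hA'pos).le) (sub_nonneg.mpr ht)]
  · -- part (ii)
    have hga : 0 < g α₀ := by
      simp only [hg, sub_self]
      ring_nf
      nlinarith
    have hgb : g (α₀ + (2/3) * Real.sqrt Δ) < 0 := by
      have hs2 : Real.sqrt Δ ^ 2 = Δ := Real.sq_sqrt hΔ.le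
      have hmA : 2 * Δ * M' < 3 * Real.sqrt Δ * (m R₀ * A') := by nlinarith [hineq', hsΔ]
      simp only [hg, add_sub_cancel_left]
      nlinarith [hmA, hs2, hM'pos]
    have hab : α₀ ≤ α₀ + (2/3) * Real.sqrt Δ := by linarith
    have hgc : ContinuousOn g (Set.Icc α₀ (α₀ + (2/3) * Real.sqrt Δ)) := by
      apply Continuous.continuousOn
      fun_prop
    have h0mem : (0:ℝ) ∈ Set.Ioo (g (α₀ + (2/3) * Real.sqrt Δ)) (g α₀) := ⟨hgb, hga⟩
    obtain ⟨ts, hts, hgts⟩ := intermediate_value_Ioo' hab hgc h0mem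
    refine ⟨ts, hts.1, hts.2, ?_, by rw [hderivm]; exact hM'pos⟩
    rw [(hrderiv ts).deriv]
    have : g ts = 0 := hgts
    simp only [hg] at this
    rw [this, mul_zero]
end

section
/- Let G > 0 and Δ > 0, and let m : (0,∞) → (0,∞) and α : (0,∞) → ℝ be differentiable with m'(R) > 0 and α'(R) > 0 for all R > 0. Define r(R,t) = (2G m(R))^{1/3} · ((9/4)(t − α(R))² + Δ)^{1/3}. Then for every R > 0 and every t ≤ α(R) (i.e. up to and including the bounce of shell R), ∂_R r(R,t) > 0; hence no shell-crossing singularity forms during the pre-bounce phase. -/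
open Real

/-- During the pre-bounce phase (`t ≤ α(R)`), if `m' > 0` and `α' > 0`, then
`∂_R r > 0` for all shells: no shell-crossing singularity forms before the
bounce. -/
theorem no_shell_crossing_before_bounce
    (G Δ : ℝ) (hG : 0 < G) (hΔ : 0 < Δ)
    (m α : ℝ → ℝ)
    (hmpos : ∀ R, 0 < R → 0 < m R)
    (hmdiff : ∀ R, 0 < R → DifferentiableAt ℝ m R)
    (hαdiff : ∀ R, 0 < R → DifferentiableAt ℝ α R)
    (hm' : ∀ R, 0 < R → 0 < deriv m R)
    (hα' : ∀ R, 0 < R → 0 < deriv α R)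
    (r : ℝ → ℝ → ℝ)
    (hr : ∀ R t, r R t =
      (2 * G * m R) ^ ((1:ℝ)/3) * ((9/4) * (t - α R) ^ 2 + Δ) ^ ((1:ℝ)/3)) :
    ∀ R, 0 < R → ∀ t, t ≤ α R → 0 < deriv (fun R' => r R' t) R := by
  intro R hR t ht
  have hfun : (fun R' => r R' t) =
      fun R' => (2 * G * m R') ^ ((1:ℝ)/3) *
        ((9/4) * (t - α R') ^ 2 + Δ) ^ ((1:ℝ)/3) := by
    funext R'; exact hr R' t
  rw [hfun]
  -- positivity of bases
  have hA : 0 < 2 * G * m R := by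
    have := hmpos R hR; positivity
  have hB : 0 < (9/4) * (t - α R) ^ 2 + Δ := by positivity
  -- derivatives of inner functions
  have hmA : HasDerivAt (fun R' => 2 * G * m R') (2 * G * deriv m R) R :=
    ((hmdiff R hR).hasDerivAt).const_mul (2 * G)
  have hαA : HasDerivAt α (deriv α R) R := (hαdiff R hR).hasDerivAt
  have hBd : HasDerivAt (fun R' => (9/4) * (t - α R') ^ 2 + Δ)
      ((9/4) * (2 * (t - α R) * (-(deriv α R)))) R := by
    have h1 : HasDerivAt (fun R' => t - α R') (-(deriv α R)) R := by
      exact hαA.const_sub t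
    have h2 := (h1.pow 2)
    have h3 : HasDerivAt (fun R' => (9/4) * (t - α R') ^ 2 + Δ) _ R :=
      (h2.const_mul ((9:ℝ)/4)).add_const Δ
    convert h3 using 1
    push_cast
    ring
  -- derivative of each rpow factor
  have hAp : HasDerivAt (fun R' => (2 * G * m R') ^ ((1:ℝ)/3))
      (2 * G * deriv m R * ((1:ℝ)/3) * (2 * G * m R) ^ ((1:ℝ)/3 - 1)) R :=
    hmA.rpow_const (Or.inl (ne_of_gt hA))
  have hBp : HasDerivAt (fun R' => ((9/4) * (t - α R') ^ 2 + Δ) ^ ((1:ℝ)/3))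
      ((9/4) * (2 * (t - α R) * (-(deriv α R))) * ((1:ℝ)/3) *
        ((9/4) * (t - α R) ^ 2 + Δ) ^ ((1:ℝ)/3 - 1)) R :=
    hBd.rpow_const (Or.inl (ne_of_gt hB))
  have hprod := hAp.mul hBp
  rw [HasDerivAt.deriv (f := fun R' => (2 * G * m R') ^ ((1:ℝ)/3) *
      ((9/4) * (t - α R') ^ 2 + Δ) ^ ((1:ℝ)/3)) hprod]
  have t1 : 0 < 2 * G * deriv m R * ((1:ℝ)/3) * (2 * G * m R) ^ ((1:ℝ)/3 - 1) *
      (((9:ℝ)/4) * (t - α R) ^ 2 + Δ) ^ ((1:ℝ)/3) := by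
    have := hm' R hR
    have h1 := Real.rpow_pos_of_pos hA ((1:ℝ)/3 - 1)
    have h2 := Real.rpow_pos_of_pos hB ((1:ℝ)/3)
    positivity
  have t2 : 0 ≤ (2 * G * m R) ^ ((1:ℝ)/3) *
      ((9/4) * (2 * (t - α R) * (-(deriv α R))) * ((1:ℝ)/3) *
        ((9/4) * (t - α R) ^ 2 + Δ) ^ ((1:ℝ)/3 - 1)) := by
    apply mul_nonneg (le_of_lt (Real.rpow_pos_of_pos hA _))
    apply mul_nonneg _ (le_of_lt (Real.rpow_pos_of_pos hB _))
    have hα := hα' R hR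
    have hts : t - α R ≤ 0 := sub_nonpos.mpr ht
    nlinarith
  linarith
end

section
/- Let G > 0 and Δ > 0, and let m : (0,∞) → (0,∞) and α : (0,∞) → ℝ be differentiable, and define r(R,t) = (2G m(R))^{1/3} · ((9/4)(t − α(R))² + Δ)^{1/3}. Then at the time t = α(R) + (2/3)√Δ one has ∂_R r / r = m'(R)/(3 m(R)) − α'(R)/(2√Δ). In particular, if m'(R) > 0 and m(R) α'(R)/m'(R) > (2/3)√Δ, then ∂_R r(R, α(R) + (2/3)√Δ) < 0. -/
open Real

/-- At the time `t = α(R) + (2/3)√Δ` after the bounce of shell `R`, one has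
`∂_R r / r = m'/(3m) − α'/(2√Δ)`; in particular, if `m' > 0` and
`m α'/m' > (2/3)√Δ`, then `∂_R r < 0` there. -/
theorem radial_derivative_after_bounce
    (G Δ : ℝ) (hG : 0 < G) (hΔ : 0 < Δ)
    (m α : ℝ → ℝ)
    (hmpos : ∀ R, 0 < R → 0 < m R)
    (hmdiff : ∀ R, 0 < R → DifferentiableAt ℝ m R)
    (hαdiff : ∀ R, 0 < R → DifferentiableAt ℝ α R)
    (r : ℝ → ℝ → ℝ)
    (hr : ∀ R t, r R t =
      (2 * G * m R) ^ ((1:ℝ)/3) * ((9/4) * (t - α R) ^ 2 + Δ) ^ ((1:ℝ)/3)) :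
    ∀ R, 0 < R →
      deriv (fun R' => r R' (α R + (2/3) * Real.sqrt Δ)) R
          / r R (α R + (2/3) * Real.sqrt Δ) =
        deriv m R / (3 * m R) - deriv α R / (2 * Real.sqrt Δ) ∧
      (0 < deriv m R → (2/3) * Real.sqrt Δ < m R * deriv α R / deriv m R →
        deriv (fun R' => r R' (α R + (2/3) * Real.sqrt Δ)) R < 0) := by
  intro R hR
  set s := Real.sqrt Δ with hs
  have hspos : 0 < s := Real.sqrt_pos.mpr hΔ
  have hs2 : s ^ 2 = Δ := Real.sq_sqrt hΔ.le
  set t0 : ℝ := α R + (2/3) * s with ht0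
  have hM : 0 < m R := hmpos R hR
  have hm' := (hmdiff R hR).hasDerivAt
  have hα' := (hαdiff R hR).hasDerivAt
  -- u and v
  have hu : HasDerivAt (fun R' => 2 * G * m R') (2 * G * deriv m R) R :=
    hm'.const_mul (2 * G)
  have hv : HasDerivAt (fun R' => (9/4) * (t0 - α R') ^ 2 + Δ)
      ((9/4) * ((2 : ℕ) * (t0 - α R) ^ (2 - 1) * (0 - deriv α R))) R := by
    exact ((((hasDerivAt_const R t0).sub hα').pow 2).const_mul (9/4)).add_const Δ
  have hupos : (0:ℝ) < 2 * G * m R := by positivity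
  have hvpos : (0:ℝ) < (9/4) * (t0 - α R) ^ 2 + Δ := by positivity
  have hA := hu.rpow_const (p := (1:ℝ)/3) (Or.inl (ne_of_gt hupos))
  have hB := hv.rpow_const (p := (1:ℝ)/3) (Or.inl (ne_of_gt hvpos))
  have hf := hA.mul hB
  have hfun : (fun R' => r R' t0) =
      (fun R' => (2 * G * m R') ^ ((1:ℝ)/3) * ((9/4) * (t0 - α R') ^ 2 + Δ) ^ ((1:ℝ)/3)) := by
    funext R'; exact hr R' t0
  have hc : t0 - α R = (2/3) * s := by rw [ht0]; ring
  have hv0 : (9/4) * (t0 - α R) ^ 2 + Δ = 2 * Δ := by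
    rw [hc, ← hs2]; ring
  set P : ℝ := (2 * G * m R) ^ ((1:ℝ)/3) with hP
  set Q : ℝ := (2 * Δ) ^ ((1:ℝ)/3) with hQ
  have hPpos : 0 < P := Real.rpow_pos_of_pos hupos _
  have hQpos : 0 < Q := Real.rpow_pos_of_pos (by positivity) _
  have hrval : r R t0 = P * Q := by rw [hr R t0, hv0]
  have hrpos : 0 < r R t0 := by rw [hrval]; positivity
  have hpow1 : (2 * G * m R) ^ ((1:ℝ)/3 - 1) = P / (2 * G * m R) := by
    rw [Real.rpow_sub hupos, Real.rpow_one]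
  have hpow2 : ((9/4) * (t0 - α R) ^ 2 + Δ) ^ ((1:ℝ)/3 - 1) = Q / (2 * Δ) := by
    rw [hv0, Real.rpow_sub (by positivity), Real.rpow_one]
  have hD : deriv (fun R' => r R' t0) R =
      2 * G * deriv m R * ((1:ℝ)/3) * (P / (2 * G * m R)) * Q +
        P * ((9/4) * ((2 : ℕ) * (t0 - α R) ^ (2 - 1) * (0 - deriv α R)) * ((1:ℝ)/3) *
          (Q / (2 * Δ))) := by
    rw [hfun]
    have := hf.deriv
    refine this.trans ?_; rw [hpow1, hpow2, hv0]
  have key : deriv (fun R' => r R' t0) R =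
      (deriv m R / (3 * m R) - deriv α R / (2 * s)) * (P * Q) := by
    rw [hD, hc, ← hs2]
    push_cast
    field_simp
    ring
  constructor
  · rw [key, hrval]
    field_simp
  · intro hm0 hlt
    have ha' : deriv m R / (3 * m R) - deriv α R / (2 * s) < 0 := by
      rw [lt_div_iff₀ hm0] at hlt
      rw [sub_neg, div_lt_div_iff₀ (by positivity) (by positivity)]
      nlinarith
    rw [key]
    exact mul_neg_of_neg_of_pos ha' (by positivity)
end

section
/- Let G > 0, γ > 0, Δ > 0, m > 0 and α ∈ ℝ. Then the function r(t) = (2G m)^{1/3} · ((9/4)(t − α)² + γ²Δ)^{1/3} is differentiable and satisfies, for all t ∈ ℝ, the effective LTB equation of motion (dr/dt)² = (2G m / r) · (1 − 2G m γ² Δ / r³). -/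
open Real

/-- The explicit solution `r(t) = (2Gm)^{1/3}((9/4)(t−α)² + γ²Δ)^{1/3}`
satisfies the effective LTB equation of motion
`ṙ² = (2Gm/r)(1 − 2Gmγ²Δ/r³)`. -/
theorem effective_ltb_solution
    (G γ Δ m α : ℝ) (hG : 0 < G) (hγ : 0 < γ) (hΔ : 0 < Δ) (hm : 0 < m)
    (r : ℝ → ℝ)
    (hr : ∀ t, r t =
      (2 * G * m) ^ ((1:ℝ)/3) * ((9/4) * (t - α) ^ 2 + γ ^ 2 * Δ) ^ ((1:ℝ)/3)) :
    ∀ t : ℝ, DifferentiableAt ℝ r t ∧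
      (deriv r t) ^ 2 =
        (2 * G * m / r t) * (1 - 2 * G * m * γ ^ 2 * Δ / (r t) ^ 3) := by
  intro t
  have hApos : 0 < 2 * G * m := by positivity
  set A : ℝ := 2 * G * m with hA
  set u : ℝ → ℝ := fun s => (9/4) * (s - α) ^ 2 + γ ^ 2 * Δ with hu
  have hupos : ∀ s, 0 < u s := fun s => by positivity
  have hreq : r = fun s => A ^ ((1:ℝ)/3) * (u s) ^ ((1:ℝ)/3) := funext hr
  have hud : HasDerivAt u ((9/2) * (t - α)) t := by
    have h1 : HasDerivAt (fun s : ℝ => s - α) 1 t := (hasDerivAt_id t).sub_const α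
    have h2 := h1.pow 2
    have h3 := (h2.const_mul (9/4 : ℝ)).add_const (γ ^ 2 * Δ)
    refine h3.congr_deriv ?_
    ring
  have hrd : HasDerivAt r
      (A ^ ((1:ℝ)/3) * (((1:ℝ)/3) * (u t) ^ ((1:ℝ)/3 - 1) * ((9/2) * (t - α)))) t := by
    rw [hreq]
    have h := (hud.rpow_const (p := (1:ℝ)/3) (Or.inl (hupos t).ne')).const_mul (A ^ ((1:ℝ)/3))
    refine h.congr_deriv ?_
    ring
  refine ⟨hrd.differentiableAt, ?_⟩
  rw [hrd.deriv, hr t]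
  -- abbreviations for the cube roots
  set p : ℝ := (u t) ^ ((1:ℝ)/3) with hp
  set q : ℝ := A ^ ((1:ℝ)/3) with hq
  have hppos : 0 < p := Real.rpow_pos_of_pos (hupos t) _
  have hqpos : 0 < q := Real.rpow_pos_of_pos hApos _
  have hp3 : p ^ 3 = u t := by
    rw [hp, ← Real.rpow_natCast ((u t) ^ ((1:ℝ)/3)) 3, ← Real.rpow_mul (hupos t).le]
    norm_num
  have hq3 : q ^ 3 = A := by
    rw [hq, ← Real.rpow_natCast (A ^ ((1:ℝ)/3)) 3, ← Real.rpow_mul hApos.le]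
    norm_num
  have hexp : (u t) ^ ((1:ℝ)/3 - 1) = 1 / p ^ 2 := by
    have : ((1:ℝ)/3 - 1) = -(((1:ℝ)/3) * 2) := by norm_num
    rw [this, Real.rpow_neg (hupos t).le, Real.rpow_mul (hupos t).le, hp]
    norm_num [Real.rpow_two]
  have hγΔ : γ ^ 2 * Δ = p ^ 3 - (9/4) * (t - α) ^ 2 := by
    rw [hp3]; simp [hu]
  rw [hexp]
  rw [← hq3]
  field_simp
  linear_combination (36) * hγΔ
end

section
/- Let n be an odd natural number and S_n(x) = Σ_{k=0}^{n} ((−1)^k / (2ⁿ (n − 2k))) · C(n,k) · sin((n − 2k)·x − nπ/2). Then S_n is strictly decreasing on the interval [−π, 0]; in particular S_n is injective there, so the conserved density v(B,r) = r^{2+3n/2} S_n(B/r²) is invertible as a function of B for B/r² ∈ [−π, 0]. -/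
open Real Finset

/-- The conserved-density profile for odd `n`. -/
noncomputable def Sodd (n : ℕ) (x : ℝ) : ℝ :=
  ∑ k ∈ Finset.range (n + 1),
    ((-1 : ℝ) ^ k / (2 ^ n * ((n : ℝ) - 2 * k))) * (n.choose k : ℝ) *
      Real.sin (((n : ℝ) - 2 * k) * x - (n : ℝ) * π / 2)

lemma cexp_sum (n : ℕ) (x : ℝ) :
    ∑ k ∈ Finset.range (n+1), ((-1:ℂ)^k * (n.choose k : ℂ)) *
      Complex.exp (((((n:ℝ) - 2*k) * x - (n:ℝ)*π/2 : ℝ) : ℂ) * Complex.I)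
    = 2^n * ((Real.sin x : ℂ))^n := by
  have key : ∀ k ∈ Finset.range (n+1),
      ((-1:ℂ)^k * (n.choose k : ℂ)) *
        Complex.exp (((((n:ℝ) - 2*k) * x - (n:ℝ)*π/2 : ℝ) : ℂ) * Complex.I)
      = ((-Complex.exp (-(x:ℂ)*Complex.I))^k * (Complex.exp ((x:ℂ)*Complex.I))^(n-k)
          * (n.choose k : ℂ)) * Complex.exp ((-( (n:ℂ)*(π:ℂ)/2))*Complex.I) := by
    intro k hk
    rw [Finset.mem_range, Nat.lt_succ_iff] at hk
    have hcast : ((n - k : ℕ) : ℂ) = (n:ℂ) - k := by push_cast [hk]; ring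
    have h1 : (-Complex.exp (-(x:ℂ)*Complex.I))^k
        = (-1:ℂ)^k * Complex.exp ((k:ℂ)*(-(x:ℂ)*Complex.I)) := by
      rw [Complex.exp_nat_mul]; ring
    have h2 : (Complex.exp ((x:ℂ)*Complex.I))^(n-k)
        = Complex.exp (((n:ℂ)-(k:ℂ))*((x:ℂ)*Complex.I)) := by
      rw [← hcast, Complex.exp_nat_mul]
    have h3 : (((((n:ℝ) - 2*k) * x - (n:ℝ)*π/2 : ℝ)) : ℂ) * Complex.I
        = (k:ℂ)*(-(x:ℂ)*Complex.I) + ((n:ℂ)-(k:ℂ))*((x:ℂ)*Complex.I)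
          + (-((n:ℂ)*(π:ℂ)/2))*Complex.I := by push_cast; ring
    rw [h1, h2, h3, Complex.exp_add, Complex.exp_add]
    ring
  rw [Finset.sum_congr rfl key, ← Finset.sum_mul]
  have hadd : ∑ k ∈ Finset.range (n+1),
      (-Complex.exp (-(x:ℂ)*Complex.I))^k * (Complex.exp ((x:ℂ)*Complex.I))^(n-k)
        * (n.choose k : ℂ)
      = ((-Complex.exp (-(x:ℂ)*Complex.I)) + Complex.exp ((x:ℂ)*Complex.I))^n := by
    rw [add_pow]
  rw [hadd]
  have hsin : (-Complex.exp (-(x:ℂ)*Complex.I)) + Complex.exp ((x:ℂ)*Complex.I)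
      = 2 * Complex.I * Complex.sin (x:ℂ) := by
    rw [Complex.sin]
    ring_nf
    rw [Complex.I_sq]
    ring
  rw [hsin, mul_pow, mul_pow]
  have hIexp : Complex.exp (((π:ℂ)/2) * Complex.I) = Complex.I := by
    rw [Complex.exp_mul_I, show ((π:ℂ)/2) = ((π/2 : ℝ) : ℂ) by push_cast; ring,
      ← Complex.ofReal_cos, ← Complex.ofReal_sin, Real.cos_pi_div_two,
      Real.sin_pi_div_two]
    simp
  have hIn : (Complex.I)^n = Complex.exp ((n:ℂ) * (((π:ℂ)/2) * Complex.I)) := by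
    rw [Complex.exp_nat_mul, hIexp]
  have hI : (Complex.I)^n * Complex.exp ((-( (n:ℂ)*(π:ℂ)/2))*Complex.I) = 1 := by
    rw [hIn, ← Complex.exp_add,
      show (n:ℂ) * (((π:ℂ)/2) * Complex.I) + (-( (n:ℂ)*(π:ℂ)/2))*Complex.I = 0 by ring,
      Complex.exp_zero]
  rw [Complex.ofReal_sin]
  linear_combination (2:ℂ)^n * (Complex.sin (x:ℂ))^n * hI

lemma cos_sum (n : ℕ) (x : ℝ) :
    ∑ k ∈ Finset.range (n+1), ((-1:ℝ)^k * (n.choose k : ℝ)) *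
      Real.cos (((n:ℝ) - 2*k) * x - (n:ℝ)*π/2)
    = 2^n * Real.sin x ^ n := by
  have h := congrArg Complex.re (cexp_sum n x)
  rw [Complex.re_sum] at h
  have h2 : ∀ k ∈ Finset.range (n+1),
      (((-1:ℂ)^k * (n.choose k : ℂ)) *
        Complex.exp (((((n:ℝ) - 2*k) * x - (n:ℝ)*π/2 : ℝ) : ℂ) * Complex.I)).re
      = ((-1:ℝ)^k * (n.choose k : ℝ)) * Real.cos (((n:ℝ) - 2*k) * x - (n:ℝ)*π/2) := by
    intro k _
    rw [show ((-1:ℂ)^k * (n.choose k : ℂ)) = ((((-1:ℝ)^k * (n.choose k : ℝ)) : ℝ) : ℂ) by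
      push_cast; ring, Complex.re_ofReal_mul, Complex.exp_ofReal_mul_I_re]
  rw [Finset.sum_congr rfl h2] at h
  rw [h]
  rw [show ((2:ℂ)^n * ((Real.sin x : ℂ))^n) = (((2^n * Real.sin x ^ n : ℝ)) : ℂ) by
    push_cast; ring, Complex.ofReal_re]

lemma hasDerivAt_Sodd (n : ℕ) (hn : Odd n) (x : ℝ) :
    HasDerivAt (Sodd n) (Real.sin x ^ n) x := by
  have hterm : ∀ k ∈ Finset.range (n+1),
      HasDerivAt (fun y : ℝ => ((-1 : ℝ) ^ k / (2 ^ n * ((n : ℝ) - 2 * k))) * (n.choose k : ℝ) *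
          Real.sin (((n : ℝ) - 2 * k) * y - (n : ℝ) * π / 2))
        ((1 / 2^n) * (((-1:ℝ)^k * (n.choose k : ℝ)) *
          Real.cos (((n:ℝ) - 2*k) * x - (n:ℝ)*π/2))) x := by
    intro k _
    have ha : (n:ℝ) - 2*k ≠ 0 := by
      obtain ⟨m, hm⟩ := hn
      intro hcontra
      have : (n:ℝ) = 2*k := by linarith
      have : n = 2*k := by exact_mod_cast this
      omega
    have hlin : HasDerivAt (fun y : ℝ => ((n:ℝ) - 2*k) * y - (n:ℝ)*π/2)
        ((n:ℝ) - 2*k) x := by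
      simpa using ((hasDerivAt_id x).const_mul ((n:ℝ) - 2*k)).sub_const ((n:ℝ)*π/2)
    have hsin := (Real.hasDerivAt_sin (((n:ℝ) - 2*k) * x - (n:ℝ)*π/2)).comp x hlin
    have := hsin.const_mul (((-1 : ℝ) ^ k / (2 ^ n * ((n : ℝ) - 2 * k))) * (n.choose k : ℝ))
    refine HasDerivAt.congr_deriv this ?_
    field_simp
  have hsum := HasDerivAt.fun_sum hterm
  have : (∑ k ∈ Finset.range (n+1), (1 / 2^n) * (((-1:ℝ)^k * (n.choose k : ℝ)) *
      Real.cos (((n:ℝ) - 2*k) * x - (n:ℝ)*π/2))) = Real.sin x ^ n := by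
    rw [← Finset.mul_sum, cos_sum]
    field_simp
  rw [this] at hsum
  exact hsum

/-- For odd `n`, `S_n` is strictly decreasing on `[−π, 0]`, hence injective
there, so `v(B,r) = r^{2+3n/2} S_n(B/r²)` is invertible in `B` for
`B/r² ∈ [−π, 0]`. -/
theorem Sodd_strictAntiOn (n : ℕ) (hn : Odd n) :
    StrictAntiOn (Sodd n) (Set.Icc (-π) 0) ∧
    Set.InjOn (Sodd n) (Set.Icc (-π) 0) ∧
    (∀ r : ℝ, 0 < r →
      Set.InjOn (fun B : ℝ => r ^ ((2 : ℝ) + 3 * (n : ℝ) / 2) * Sodd n (B / r ^ 2))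
        {B : ℝ | B / r ^ 2 ∈ Set.Icc (-π) 0}) := by
  have hanti : StrictAntiOn (Sodd n) (Set.Icc (-π) 0) := by
    apply strictAntiOn_of_deriv_neg (convex_Icc _ _)
    · exact fun x _ => (hasDerivAt_Sodd n hn x).differentiableAt.continuousAt.continuousWithinAt
    · intro x hx
      rw [interior_Icc] at hx
      rw [(hasDerivAt_Sodd n hn x).deriv]
      have hs : Real.sin x < 0 := Real.sin_neg_of_neg_of_neg_pi_lt hx.2 hx.1
      exact hn.pow_neg hs
  refine ⟨hanti, hanti.injOn, ?_⟩
  intro r hr B1 h1 B2 h2 heq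
  have hrpow : (0:ℝ) < r ^ ((2 : ℝ) + 3 * (n : ℝ) / 2) := Real.rpow_pos_of_pos hr _
  have hS : Sodd n (B1 / r ^ 2) = Sodd n (B2 / r ^ 2) := by
    have := mul_left_cancel₀ (ne_of_gt hrpow) heq
    exact this
  have := hanti.injOn h1 h2 hS
  have hr2 : (r:ℝ)^2 ≠ 0 := pow_ne_zero 2 (ne_of_gt hr)
  field_simp at this
  exact this
end

section
/- Let γ > 0, Δ > 0, and let B : {(r,t) : r > 0, t ∈ ℝ} → ℝ be continuously differentiable and satisfy ∂_t B + ∂_r [ (r³/(2γ√Δ)) sin²(B/r²) ] = 0 at every point with r > 0. For n ∈ ℕ let Σ_n denote S_n if n is odd and S̃_n if n is even, where S_n(x) = Σ_{k=0}^{n} ((−1)^k/(2ⁿ(n−2k))) C(n,k) sin((n−2k)x − nπ/2) and S̃_n(x) = Σ_{k≠n/2} ((−1)^k/(2ⁿ(n−2k))) C(n,k) sin((n−2k)x − nπ/2) + (1/2ⁿ) C(n,n/2) x. Then for every n ∈ ℕ, B also satisfies the conservation law ∂_t [ r^{2+3n/2} Σ_n(B/r²) ] + ∂_r [ r^{3(n+2)/2}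 sin^{n+2}(B/r²) / ((n+2)γ√Δ) ] = 0 at every point with r > 0. -/
open Real Finset

/-- The conserved-density profile for even `n`. -/
noncomputable def Seven (n : ℕ) (x : ℝ) : ℝ :=
  (∑ k ∈ (Finset.range (n + 1)).erase (n / 2),
    ((-1 : ℝ) ^ k / (2 ^ n * ((n : ℝ) - 2 * k))) * (n.choose k : ℝ) *
      Real.sin (((n : ℝ) - 2 * k) * x - (n : ℝ) * π / 2)) +
  (1 / 2 ^ n : ℝ) * (n.choose (n / 2) : ℝ) * x

/-- `Σ_n = S_n` for odd `n` and `S̃_n` for even `n`. -/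
noncomputable def SigmaN (n : ℕ) (x : ℝ) : ℝ :=
  if Odd n then Sodd n x else Seven n x

lemma exp_pi2I : Complex.exp ((π/2 : ℝ) * Complex.I) = Complex.I := by
  rw [Complex.exp_mul_I]
  push_cast
  rw [Complex.cos_pi_div_two, Complex.sin_pi_div_two]
  ring

lemma exp_neg_pi2I : Complex.exp (-((π/2 : ℝ) * Complex.I)) = -Complex.I := by
  rw [Complex.exp_neg, exp_pi2I, Complex.inv_I]

lemma csin_pow (n : ℕ) (x : ℂ) :
    Complex.sin x ^ n = ∑ k ∈ Finset.range (n + 1),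
      ((-1 : ℂ) ^ k / 2 ^ n) * (n.choose k : ℂ) *
        Complex.cos (((n : ℂ) - 2 * k) * x - (n : ℂ) * (π : ℂ) / 2) := by
  set a := Complex.exp (x * Complex.I) with ha
  set b := Complex.exp (-(x * Complex.I)) with hb
  have hcos : ∀ k ∈ Finset.range (n+1),
      ((-1 : ℂ) ^ k / 2 ^ n) * (n.choose k : ℂ) *
        Complex.cos (((n : ℂ) - 2 * k) * x - (n : ℂ) * (π : ℂ) / 2)
      = ((-Complex.I)^n/2^(n+1)) * ((-b)^k * a^(n-k) * (n.choose k : ℂ))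
        + (Complex.I^n/2^(n+1)) * ((-a)^k * b^(n-k) * (n.choose k : ℂ)) := by
    intro k hk
    have hk' : k ≤ n := Nat.lt_succ_iff.mp (Finset.mem_range.mp hk)
    have hnk : ((n - k : ℕ) : ℂ) = (n : ℂ) - k := by push_cast [hk']; ring
    have e1 : ((((n : ℂ) - 2 * k) * x - (n : ℂ) * (π : ℂ) / 2)) * Complex.I
        = ((n-k : ℕ) : ℂ) * (x * Complex.I) + (k : ℂ) * (-(x * Complex.I))
          + (n : ℂ) * (-(((π/2 : ℝ) : ℂ) * Complex.I)) := by
      rw [hnk]; push_cast; ring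
    have e2 : (-((((n : ℂ) - 2 * k) * x - (n : ℂ) * (π : ℂ) / 2))) * Complex.I
        = ((n-k : ℕ) : ℂ) * (-(x * Complex.I)) + (k : ℂ) * (x * Complex.I)
          + (n : ℂ) * (((π/2 : ℝ) : ℂ) * Complex.I) := by
      rw [hnk]; push_cast; ring
    rw [show Complex.cos (((n : ℂ) - 2 * k) * x - (n : ℂ) * (π : ℂ) / 2)
        = (Complex.exp ((((n : ℂ) - 2 * k) * x - (n : ℂ) * (π : ℂ) / 2) * Complex.I)
          + Complex.exp ((-(((n : ℂ) - 2 * k) * x - (n : ℂ) * (π : ℂ) / 2)) * Complex.I)) / 2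
      from rfl, e1, e2]
    rw [Complex.exp_add, Complex.exp_add, Complex.exp_add, Complex.exp_add,
      Complex.exp_nat_mul, Complex.exp_nat_mul, Complex.exp_nat_mul, Complex.exp_nat_mul,
      Complex.exp_nat_mul, Complex.exp_nat_mul, exp_pi2I, exp_neg_pi2I]
    simp only [← ha, ← hb]
    ring
  rw [Finset.sum_congr rfl hcos, Finset.sum_add_distrib, ← Finset.mul_sum, ← Finset.mul_sum,
    ← add_pow, ← add_pow]
  have h1 : -b + a = a - b := by ring
  have h2 : -a + b = -(a - b) := by ring
  rw [h1, h2]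
  have hsin : Complex.sin x = (a - b) * (-Complex.I) / 2 := by
    rw [Complex.sin, ha, hb]; ring_nf
  rw [hsin, neg_pow (a - b)]
  have key : ((a - b) * -Complex.I / 2) ^ n = (-Complex.I) ^ n * (a - b) ^ n / 2 ^ n := by
    rw [div_pow, mul_pow]; ring
  have h3 : (-Complex.I) ^ n = Complex.I ^ n * (-1 : ℂ) ^ n := by
    rw [← mul_pow]; ring_nf
  rw [key]
  linear_combination ((a - b) ^ n / 2 ^ (n + 1)) * h3

lemma rsin_pow (n : ℕ) (x : ℝ) :
    Real.sin x ^ n = ∑ k ∈ Finset.range (n + 1),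
      ((-1 : ℝ) ^ k / 2 ^ n) * (n.choose k : ℝ) *
        Real.cos (((n : ℝ) - 2 * k) * x - (n : ℝ) * π / 2) := by
  have h := csin_pow n (x : ℂ)
  apply Complex.ofReal_injective
  push_cast
  convert h using 2

lemma cos_nat_pi (m : ℕ) : Real.cos (m * π) = (-1 : ℝ) ^ m := by
  induction m with
  | zero => simp
  | succ k ih =>
      have h : ((k + 1 : ℕ) : ℝ) * π = (k : ℝ) * π + π := by push_cast; ring
      rw [h, Real.cos_add_pi, ih, pow_succ]
      ring

lemma term_deriv (n k : ℕ) (x : ℝ) (hm : ((n : ℝ) - 2 * k) ≠ 0) :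
    HasDerivAt (fun x : ℝ =>
      ((-1 : ℝ) ^ k / (2 ^ n * ((n : ℝ) - 2 * k))) * (n.choose k : ℝ) *
        Real.sin (((n : ℝ) - 2 * k) * x - (n : ℝ) * π / 2))
      (((-1 : ℝ) ^ k / 2 ^ n) * (n.choose k : ℝ) *
        Real.cos (((n : ℝ) - 2 * k) * x - (n : ℝ) * π / 2)) x := by
  have hlin : HasDerivAt (fun x : ℝ => ((n : ℝ) - 2 * k) * x - (n : ℝ) * π / 2)
      ((n : ℝ) - 2 * k) x := by
    simpa using ((hasDerivAt_id x).const_mul ((n : ℝ) - 2 * k)).sub_const ((n : ℝ) * π / 2)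
  have h := ((Real.hasDerivAt_sin _).comp x hlin).const_mul
      (((-1 : ℝ) ^ k / (2 ^ n * ((n : ℝ) - 2 * k))) * (n.choose k : ℝ))
  refine h.congr_deriv ?_
  symm
  field_simp

lemma hasDerivAt_SigmaN (n : ℕ) (x : ℝ) :
    HasDerivAt (SigmaN n) (Real.sin x ^ n) x := by
  rcases Nat.even_or_odd n with he | ho
  · have hodd : ¬ Odd n := Nat.not_odd_iff_even.mpr he
    have hfun : SigmaN n = Seven n := by funext y; simp [SigmaN, hodd]
    rw [hfun]
    obtain ⟨m, hm⟩ := he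
    have hn2 : n / 2 = m := by omega
    have hmem : n / 2 ∈ Finset.range (n + 1) := by
      simp [Nat.lt_succ_iff]; omega
    have hsum : HasDerivAt (fun x : ℝ => ∑ k ∈ (Finset.range (n + 1)).erase (n / 2),
        ((-1 : ℝ) ^ k / (2 ^ n * ((n : ℝ) - 2 * k))) * (n.choose k : ℝ) *
          Real.sin (((n : ℝ) - 2 * k) * x - (n : ℝ) * π / 2))
        (∑ k ∈ (Finset.range (n + 1)).erase (n / 2),
          ((-1 : ℝ) ^ k / 2 ^ n) * (n.choose k : ℝ) *
            Real.cos (((n : ℝ) - 2 * k) * x - (n : ℝ) * π / 2)) x := by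
      apply HasDerivAt.fun_sum
      intro k hk
      apply term_deriv
      intro h0
      have : n = 2 * k := by exact_mod_cast (by linarith : (n : ℝ) = 2 * k)
      have : k = n / 2 := by omega
      exact (Finset.mem_erase.mp hk).1 this
    have hlin : HasDerivAt (fun x : ℝ => (1 / 2 ^ n : ℝ) * (n.choose (n / 2) : ℝ) * x)
        ((1 / 2 ^ n : ℝ) * (n.choose (n / 2) : ℝ)) x := by
      simpa using (hasDerivAt_id x).const_mul ((1 / 2 ^ n : ℝ) * (n.choose (n / 2) : ℝ))
    have h := hsum.add hlin
    refine h.congr_deriv ?_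
    symm
    rw [rsin_pow n x]
    rw [← Finset.add_sum_erase _ _ hmem]
    have hzero : ((n : ℝ) - 2 * (n / 2 : ℕ)) = 0 := by
      rw [hn2]; push_cast [hm]; ring
    rw [hzero]
    have hcosv : Real.cos ((0 : ℝ) * x - (n : ℝ) * π / 2) = (-1 : ℝ) ^ m := by
      have : (0 : ℝ) * x - (n : ℝ) * π / 2 = -(m * π) := by push_cast [hm]; ring
      rw [this, Real.cos_neg, cos_nat_pi]
    rw [hcosv, hn2]
    have hsq : ((-1 : ℝ) ^ m) * ((-1 : ℝ) ^ m) = 1 := by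
      rw [← pow_add]
      exact Even.neg_one_pow ⟨m, rfl⟩
    linear_combination ((n.choose m : ℝ) / 2 ^ n) * hsq
  · have hfun : SigmaN n = Sodd n := by funext y; simp [SigmaN, ho]
    rw [hfun]
    have hsum : HasDerivAt (fun x : ℝ => Sodd n x)
        (∑ k ∈ Finset.range (n + 1),
          ((-1 : ℝ) ^ k / 2 ^ n) * (n.choose k : ℝ) *
            Real.cos (((n : ℝ) - 2 * k) * x - (n : ℝ) * π / 2)) x := by
      unfold Sodd
      apply HasDerivAt.fun_sum
      intro k hk
      apply term_deriv
      intro h0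
      have : n = 2 * k := by exact_mod_cast (by linarith : (n : ℝ) = 2 * k)
      exact (Nat.not_even_iff_odd.mpr ho) ⟨k, by omega⟩
    rw [rsin_pow n x]
    exact hsum

/-- Any smooth solution of the effective dust-collapse equation also satisfies,
for every `n`, the conservation law
`∂_t[r^{2+3n/2} Σ_n(B/r²)] + ∂_r[r^{3(n+2)/2} sin^{n+2}(B/r²)/((n+2)γ√Δ)] = 0`. -/
theorem infinite_class_conservation_laws
    (γ Δ : ℝ) (hγ : 0 < γ) (hΔ : 0 < Δ)
    (B : ℝ → ℝ → ℝ)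
    (hB : ContDiffOn ℝ 1 (fun p : ℝ × ℝ => B p.1 p.2) {p : ℝ × ℝ | 0 < p.1})
    (hPDE : ∀ r t : ℝ, 0 < r →
      deriv (fun t' => B r t') t +
        deriv (fun r' => r' ^ 3 / (2 * γ * Real.sqrt Δ) *
          Real.sin (B r' t / r' ^ 2) ^ 2) r = 0) :
    ∀ n : ℕ, ∀ r t : ℝ, 0 < r →
      deriv (fun t' => r ^ ((2 : ℝ) + 3 * (n : ℝ) / 2) * SigmaN n (B r t' / r ^ 2)) t +
        deriv (fun r' => r' ^ ((3 * ((n : ℝ) + 2)) / 2) *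
          Real.sin (B r' t / r' ^ 2) ^ (n + 2) /
            (((n : ℝ) + 2) * γ * Real.sqrt Δ)) r = 0 := by
  intro n r t hr
  have hs : 0 < Real.sqrt Δ := Real.sqrt_pos.mpr hΔ
  have hrne : r ≠ 0 := ne_of_gt hr
  have hn2 : ((n : ℝ) + 2) ≠ 0 := by positivity
  -- differentiability of B at (r, t)
  have hopen : IsOpen {p : ℝ × ℝ | 0 < p.1} := isOpen_lt continuous_const continuous_fst
  have hdiff : DifferentiableAt ℝ (fun p : ℝ × ℝ => B p.1 p.2) (r, t) :=
    (hB.differentiableOn one_ne_zero).differentiableAt (hopen.mem_nhds hr)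
  have hBt : HasDerivAt (fun t' => B r t') (deriv (fun t' => B r t') t) t := by
    have hcurve : DifferentiableAt ℝ (fun t' : ℝ => ((r, t') : ℝ × ℝ)) t :=
      (differentiableAt_const r).prodMk differentiableAt_id
    exact (hdiff.comp t hcurve).hasDerivAt
  have hBr : HasDerivAt (fun r' => B r' t) (deriv (fun r' => B r' t) r) r := by
    have hcurve : DifferentiableAt ℝ (fun r' : ℝ => ((r', t) : ℝ × ℝ)) r :=
      differentiableAt_id.prodMk (differentiableAt_const t)
    exact (hdiff.comp r hcurve).hasDerivAt
  set Bt := deriv (fun t' => B r t') t with hBtdef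
  set Br := deriv (fun r' => B r' t) r with hBrdef
  set u := B r t / r ^ 2 with hu
  set W := (Br * r ^ 2 - B r t * (2 * r)) / ((r ^ 2) ^ 2) with hW
  -- derivative of r' ↦ B r' t / r'^2
  have hw : HasDerivAt (fun r' => B r' t / r' ^ 2) W r := by
    have hp : HasDerivAt (fun r' : ℝ => r' ^ 2) (2 * r) r := by
      simpa using hasDerivAt_pow 2 r
    simpa [hW] using hBr.fun_div hp (pow_ne_zero 2 hrne)
  -- PDE flux derivative
  have hsin2 : HasDerivAt (fun r' => Real.sin (B r' t / r' ^ 2) ^ 2)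
      (2 * Real.sin u ^ 1 * (Real.cos u * W)) r := by
    have hcomp : HasDerivAt (fun r' => Real.sin (B r' t / r' ^ 2)) (Real.cos u * W) r := by
      simpa [Function.comp_def] using (Real.hasDerivAt_sin u).comp r hw
    simpa using hcomp.fun_pow 2
  have hcube : HasDerivAt (fun r' : ℝ => r' ^ 3 / (2 * γ * Real.sqrt Δ))
      (3 * r ^ 2 / (2 * γ * Real.sqrt Δ)) r := by
    simpa using (hasDerivAt_pow 3 r).div_const (2 * γ * Real.sqrt Δ)
  have hF : HasDerivAt (fun r' => r' ^ 3 / (2 * γ * Real.sqrt Δ) *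
      Real.sin (B r' t / r' ^ 2) ^ 2)
      (3 * r ^ 2 / (2 * γ * Real.sqrt Δ) * Real.sin u ^ 2 +
        r ^ 3 / (2 * γ * Real.sqrt Δ) * (2 * Real.sin u ^ 1 * (Real.cos u * W))) r :=
    hcube.mul hsin2
  have hPDE' := hPDE r t hr
  rw [hF.deriv] at hPDE'
  have hBtval : Bt = -(3 * r ^ 2 / (2 * γ * Real.sqrt Δ) * Real.sin u ^ 2 +
      r ^ 3 / (2 * γ * Real.sqrt Δ) * (2 * Real.sin u ^ 1 * (Real.cos u * W))) := by
    rw [← hBtdef] at hPDE'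
    linarith
  -- t-derivative of the density
  have hgt : HasDerivAt (fun t' => r ^ ((2 : ℝ) + 3 * (n : ℝ) / 2) * SigmaN n (B r t' / r ^ 2))
      (r ^ ((2 : ℝ) + 3 * (n : ℝ) / 2) * (Real.sin u ^ n * (Bt / r ^ 2))) t := by
    have h0 : HasDerivAt (fun t' => B r t' / r ^ 2) (Bt / r ^ 2) t := hBt.div_const _
    have h1 : HasDerivAt (fun t' => SigmaN n (B r t' / r ^ 2))
        (Real.sin u ^ n * (Bt / r ^ 2)) t := by
      simpa [Function.comp_def] using (hasDerivAt_SigmaN n u).comp t h0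
    simpa using h1.const_mul (r ^ ((2 : ℝ) + 3 * (n : ℝ) / 2))
  -- r-derivative of the flux
  have hrp : HasDerivAt (fun r' : ℝ => r' ^ ((3 * ((n : ℝ) + 2)) / 2))
      (((3 * ((n : ℝ) + 2)) / 2) * r ^ ((3 * ((n : ℝ) + 2)) / 2 - 1)) r :=
    Real.hasDerivAt_rpow_const (Or.inl hrne)
  have hsn : HasDerivAt (fun r' => Real.sin (B r' t / r' ^ 2) ^ (n + 2))
      (((n : ℝ) + 2) * Real.sin u ^ (n + 1) * (Real.cos u * W)) r := by
    have hcomp : HasDerivAt (fun r' => Real.sin (B r' t / r' ^ 2)) (Real.cos u * W) r := by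
      simpa [Function.comp_def] using (Real.hasDerivAt_sin u).comp r hw
    have := hcomp.fun_pow (n + 2)
    simpa [Nat.add_sub_cancel] using this
  have hfr : HasDerivAt (fun r' => r' ^ ((3 * ((n : ℝ) + 2)) / 2) *
      Real.sin (B r' t / r' ^ 2) ^ (n + 2) / (((n : ℝ) + 2) * γ * Real.sqrt Δ))
      ((((3 * ((n : ℝ) + 2)) / 2) * r ^ ((3 * ((n : ℝ) + 2)) / 2 - 1) *
          Real.sin u ^ (n + 2) +
        r ^ ((3 * ((n : ℝ) + 2)) / 2) *
          (((n : ℝ) + 2) * Real.sin u ^ (n + 1) * (Real.cos u * W))) /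
        (((n : ℝ) + 2) * γ * Real.sqrt Δ)) r :=
    (hrp.mul hsn).div_const _
  rw [hgt.deriv, hfr.deriv]
  -- rpow arithmetic
  have e1 : r ^ ((2 : ℝ) + 3 * (n : ℝ) / 2) = r ^ (3 * (n : ℝ) / 2) * r ^ 2 := by
    rw [Real.rpow_add hr]
    rw [show ((2 : ℝ)) = ((2 : ℕ) : ℝ) by norm_num, Real.rpow_natCast]
    ring
  have e2 : r ^ ((3 * ((n : ℝ) + 2)) / 2 - 1) = r ^ (3 * (n : ℝ) / 2) * r ^ 2 := by
    rw [show (3 * ((n : ℝ) + 2)) / 2 - 1 = 3 * (n : ℝ) / 2 + ((2 : ℕ) : ℝ) by push_cast; ring,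
      Real.rpow_add hr, Real.rpow_natCast]
  have e3 : r ^ ((3 * ((n : ℝ) + 2)) / 2) = r ^ (3 * (n : ℝ) / 2) * r ^ 3 := by
    rw [show (3 * ((n : ℝ) + 2)) / 2 = 3 * (n : ℝ) / 2 + ((3 : ℕ) : ℝ) by push_cast; ring,
      Real.rpow_add hr, Real.rpow_natCast]
  rw [e1, e2, e3, hBtval, hW]
  field_simp
  ring
end
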